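/- The energy of a graph (the sum of the absolute values of the eigenvalues of its adjacency matrix) is never an odd integer. -/

import Mathlib

open SimpleGraph Polynomial Matrix

-- eigenvalues of the adjacency matrix are algebraic integers
lemma eig_integral {V : Type*} [Fintype V] [DecidableEq V]
    (G : SimpleGraph V) [DecidableRel G.Adj]
    (hA : (G.adjMatrix ℝ).IsHermitian) (i : V) :
    IsIntegral ℤ (hA.eigenvalues i) := by
  have hmem := hA.eigenvalues_mem_spectrum_real i
  set μ := hA.eigenvalues i with hμ
  have hdet : (algebraMap ℝ (Matrix V V ℝ) μ - G.adjMatrix ℝ).det = 0 := by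
    by_contra h
    exact (spectrum.mem_iff.mp hmem)
      ((Matrix.isUnit_iff_isUnit_det _).mpr (isUnit_iff_ne_zero.mpr h))
  refine ⟨(G.adjMatrix ℤ).charpoly, (G.adjMatrix ℤ).charpoly_monic, ?_⟩
  have hmap : (G.adjMatrix ℤ).map (Int.castRingHom ℝ) = G.adjMatrix ℝ := by
    ext a b
    simp [Matrix.map_apply, apply_ite]
  have hcp : (G.adjMatrix ℤ).charpoly.map (Int.castRingHom ℝ)
      = (G.adjMatrix ℝ).charpoly := by
    rw [← Matrix.charpoly_map, hmap]
  have heval : (G.adjMatrix ℝ).charpoly.eval μ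
      = (algebraMap ℝ (Matrix V V ℝ) μ - G.adjMatrix ℝ).det := by
    rw [Matrix.charpoly, ← Polynomial.coe_evalRingHom, RingHom.map_det]
    congr 1
    ext a b
    by_cases h : a = b <;>
      simp [h, charmatrix_apply, Matrix.algebraMap_matrix_apply, Matrix.diagonal_apply, apply_ite (eval μ)]
  have hfin : (Polynomial.map (algebraMap ℤ ℝ) (G.adjMatrix ℤ).charpoly).eval μ = 0 := by
    have he : algebraMap ℤ ℝ = Int.castRingHom ℝ := rfl
    rw [he, hcp, heval, hdet]
  rwa [Polynomial.eval₂_eq_eval_map]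

theorem energy_ne_odd_integer {V : Type*} [Fintype V] [DecidableEq V]
    (G : SimpleGraph V) [DecidableRel G.Adj]
    (hA : (G.adjMatrix ℝ).IsHermitian) (k : ℤ) (hk : Odd k) :
    ∑ i, |hA.eigenvalues i| ≠ (k : ℝ) := by
  intro hE
  -- sum of eigenvalues is the trace, which is 0
  have htr : ∑ i, hA.eigenvalues i = 0 := by
    have h1 : (G.adjMatrix ℝ).trace = ∑ i, hA.eigenvalues i := by
      rw [hA.trace_eq_sum_eigenvalues]
      simp
    rw [← h1, SimpleGraph.trace_adjMatrix]
  have key : ∀ x : ℝ, |x| = 2 * max x 0 - x := by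
    intro x
    rcases le_total x 0 with h | h
    · rw [max_eq_right h, abs_of_nonpos h]; ring
    · rw [max_eq_left h, abs_of_nonneg h]; ring
  -- energy = 2 * sum of positive parts
  have h2 : (k : ℝ) = 2 * ∑ i, max (hA.eigenvalues i) 0 := by
    rw [← hE, Finset.sum_congr rfl (fun i _ => key _), Finset.sum_sub_distrib,
      htr, sub_zero, ← Finset.mul_sum]
  -- the sum of positive parts is an algebraic integer
  have hint : IsIntegral ℤ (∑ i, max (hA.eigenvalues i) 0) := by
    apply IsIntegral.sum
    intro i _
    rcases le_total (hA.eigenvalues i) 0 with h | h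
    · rw [max_eq_right h]; exact isIntegral_zero
    · rw [max_eq_left h]; exact eig_integral G hA i
  -- so (k/2 : ℚ) is a rational algebraic integer, hence an integer
  have hval : (∑ i, max (hA.eigenvalues i) 0) = ((k : ℚ) / 2 : ℚ) := by
    push_cast
    linarith
  rw [hval] at hint
  have hint' : IsIntegral ℤ ((k : ℚ) / 2) :=
    (isIntegral_algHom_iff ((algebraMap ℚ ℝ).toIntAlgHom)
      (algebraMap ℚ ℝ).injective).mp hint
  obtain ⟨y, hy⟩ := IsIntegrallyClosed.isIntegral_iff.mp hint'
  have h3 : (2 * y : ℚ) = (k : ℚ) := by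
    rw [show ((algebraMap ℤ ℚ) y : ℚ) = (y : ℚ) from rfl] at hy
    field_simp at hy
    linarith
  have hky : k = 2 * y := by exact_mod_cast h3.symm
  rw [Int.not_even_iff_odd.symm] at hk
  exact hk ⟨y, by omega⟩
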